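/- Let Q be a finite connected quiver in which every arrow lies on a cycle, every vertex lies on exactly two cycles, and any two distinct cycles have at most one vertex in common. Then the graph G(Q) whose vertices are the cycles of Q, with an edge between two cycles whenever they share a vertex, is a tree; consequently the cycles of Q can be 2-colored (into α-cycles and β-cycles) so that intersecting cycles have different colors. -/

import Mathlib

namespace BrauerQuiver

variable {V E : Type*}

/-- A set of arrows `C` of a quiver (directed multigraph with source `s` and target `t`)
forms an oriented cycle through distinct vertices: it is nonempty, every visited vertex
has exactly one outgoing arrow in `C` (so the vertices are distinct), every arrow in `C`
has a successor in `C`, and `C` is connected under consecutiveness. -/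
def IsCycleSet (s t : E → V) (C : Set E) : Prop :=
  C.Nonempty ∧
  Set.InjOn s C ∧
  (∀ e ∈ C, ∃ e' ∈ C, s e' = t e) ∧
  (∀ e ∈ C, ∀ e' ∈ C,
    Relation.ReflTransGen (fun a b => a ∈ C ∧ b ∈ C ∧ t a = s b) e e')

/-- The set of vertices of a set of arrows. -/
def verts (s : E → V) (C : Set E) : Set V := s '' C

end BrauerQuiver

open BrauerQuiver

namespace BQAux

variable {V E : Type*} {s t : E → V} {C : Set E}

/-- `Ok s t C u w l`: the list of arrows `l` is a directed walk from `u` to `w`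
inside the arrow set `C`. -/
def Ok (s t : E → V) (C : Set E) : V → V → List E → Prop
  | u, w, [] => u = w
  | u, w, e :: l => e ∈ C ∧ s e = u ∧ Ok s t C (t e) w l

lemma ok_nil {u w : V} : Ok s t C u w [] ↔ u = w := Iff.rfl

lemma ok_cons {u w : V} {e : E} {l : List E} :
    Ok s t C u w (e :: l) ↔ e ∈ C ∧ s e = u ∧ Ok s t C (t e) w l := Iff.rfl

lemma Ok.mem {u w : V} {l : List E} (h : Ok s t C u w l) : ∀ e ∈ l, e ∈ C := by
  induction l generalizing u with
  | nil => intro e he; simp at he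
  | cons a l ih =>
    rcases h with ⟨ha, -, h⟩
    intro e he
    rcases List.mem_cons.mp he with rfl | he
    · exact ha
    · exact ih h e he

lemma ok_append {A B : List E} {u w : V} :
    Ok s t C u w (A ++ B) ↔ ∃ m, Ok s t C u m A ∧ Ok s t C m w B := by
  induction A generalizing u with
  | nil => simp [ok_nil]
  | cons a A ih =>
    simp only [List.cons_append, ok_cons, ih]
    constructor
    · rintro ⟨ha, hs, m, h1, h2⟩; exact ⟨m, ⟨ha, hs, h1⟩, h2⟩
    · rintro ⟨m, ⟨ha, hs, h1⟩, h2⟩; exact ⟨ha, hs, m, h1, h2⟩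

lemma ok_shorten {u w : V} {l : List E} (h : Ok s t C u w l) :
    ∃ l', Ok s t C u w l' ∧ (l'.map s).Nodup ∧ w ∉ l'.map s := by
  induction l generalizing u with
  | nil => exact ⟨[], h, by simp, by simp⟩
  | cons a l ih =>
    rcases h with ⟨ha, hs, h⟩
    by_cases huw : u = w
    · exact ⟨[], huw, by simp, by simp⟩
    rcases ih h with ⟨l₂, hok, hnd, hw⟩
    by_cases hu : u ∈ l₂.map s
    · rcases List.mem_map.mp hu with ⟨e', he', hse'⟩
      rcases List.append_of_mem he' with ⟨A, B, rfl⟩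
      rcases ok_append.mp hok with ⟨m, -, h2⟩
      rcases h2 with ⟨he'C, hse'2, h3⟩
      refine ⟨e' :: B, ⟨he'C, hse', h3⟩, ?_, ?_⟩
      · have : ((A ++ e' :: B).map s).Nodup := hnd
        rw [List.map_append] at this
        exact this.of_append_right
      · intro hmem
        exact hw (by rw [List.map_append]; exact List.mem_append_right _ hmem)
    · refine ⟨a :: l₂, ⟨ha, hs, hok⟩, ?_, ?_⟩
      · rw [List.map_cons, List.nodup_cons, hs]; exact ⟨hu, hnd⟩
      · simp only [List.map_cons, List.mem_cons, hs]
        rintro (rfl | hmem)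
        · exact huw rfl
        · exact hw hmem

lemma nodup_map_mem_inj {α β : Type*} {f : α → β} {l : List α}
    (h : (l.map f).Nodup) {a b : α} (ha : a ∈ l) (hb : b ∈ l) (hf : f a = f b) : a = b := by
  induction l with
  | nil => simp at ha
  | cons c l ih =>
    simp only [List.map_cons, List.nodup_cons] at h
    rcases List.mem_cons.mp ha with rfl | ha'
    · rcases List.mem_cons.mp hb with rfl | hb'
      · rfl
      · exact absurd (hf ▸ List.mem_map_of_mem (f := f) hb') h.1
    · rcases List.mem_cons.mp hb with rfl | hb'
      · exact absurd (hf ▸ List.mem_map_of_mem (f := f) ha') h.1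
      · exact ih h.2 ha' hb'

lemma ok_reach_end {P : E → Prop} {u w : V} {l : List E} (h : Ok s t C u w l)
    (hP : ∀ x ∈ l, P x) :
    ∀ e ∈ l, ∃ e' ∈ l, t e' = w ∧
      Relation.ReflTransGen (fun a b => P a ∧ P b ∧ t a = s b) e e' := by
  induction l generalizing u with
  | nil => intro e he; simp at he
  | cons a l ih =>
    obtain ⟨-, -, h⟩ := h
    intro e he
    rcases List.mem_cons.mp he with rfl | he'
    · cases l with
      | nil => exact ⟨e, List.mem_cons_self, h, Relation.ReflTransGen.refl⟩
      | cons b l' =>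
        have hstep : Relation.ReflTransGen (fun a b => P a ∧ P b ∧ t a = s b) e b :=
          Relation.ReflTransGen.single
            ⟨hP e (List.mem_cons_self), hP b (by simp), h.2.1.symm⟩
        rcases ih h (fun x hx => hP x (List.mem_cons_of_mem _ hx)) b (List.mem_cons_self)
          with ⟨e', he', ht, hr⟩
        exact ⟨e', List.mem_cons_of_mem _ he', ht, hstep.trans hr⟩
    · rcases ih h (fun x hx => hP x (List.mem_cons_of_mem _ hx)) e he' with ⟨e', he', ht, hr⟩
      exact ⟨e', List.mem_cons_of_mem _ he', ht, hr⟩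

lemma ok_reach_head {P : E → Prop} {u w : V} {a : E} {l : List E}
    (h : Ok s t C u w (a :: l)) (hP : ∀ x ∈ a :: l, P x) :
    ∀ e ∈ a :: l, Relation.ReflTransGen (fun a b => P a ∧ P b ∧ t a = s b) a e := by
  induction l generalizing u a with
  | nil =>
    intro e he
    rcases List.mem_cons.mp he with rfl | he'
    · exact Relation.ReflTransGen.refl
    · simp at he'
  | cons b l ih =>
    intro e he
    rcases List.mem_cons.mp he with rfl | he'
    · exact Relation.ReflTransGen.refl
    · obtain ⟨-, -, h⟩ := h
      have hstep : Relation.ReflTransGen (fun a b => P a ∧ P b ∧ t a = s b) a b :=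
        Relation.ReflTransGen.single
          ⟨hP a (List.mem_cons_self), hP b (by simp), h.2.1.symm⟩
      exact hstep.trans (ih h (fun x hx => hP x (List.mem_cons_of_mem _ hx)) e he')

lemma target_mem_verts (hC : IsCycleSet s t C) {e : E} (he : e ∈ C) :
    t e ∈ verts s C := by
  rcases hC.2.2.1 e he with ⟨e', he', hse'⟩
  exact ⟨e', he', hse'⟩

lemma exists_ok_path (hC : IsCycleSet s t C) {u w : V}
    (hu : u ∈ verts s C) (hw : w ∈ verts s C) :
    ∃ l, Ok s t C u w l ∧ (l.map s).Nodup ∧ w ∉ l.map s := by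
  rcases hu with ⟨eu, heu, rfl⟩
  rcases hw with ⟨ew, hew, rfl⟩
  have hr := hC.2.2.2 eu heu ew hew
  clear heu
  suffices h : ∃ l, Ok s t C (s eu) (s ew) l from
    let ⟨l, hl⟩ := h; ok_shorten hl
  induction hr using Relation.ReflTransGen.head_induction_on with
  | refl => exact ⟨[], rfl⟩
  | head hab _ ih =>
    rcases ih with ⟨l, hl⟩
    exact ⟨_ :: l, ⟨hab.1, rfl, by rw [hab.2.2]; exact hl⟩⟩

lemma ok_succ {u w : V} {l : List E} (h : Ok s t C u w l) :
    ∀ e ∈ l, (∃ e' ∈ l, s e' = t e) ∨ t e = w := by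
  induction l generalizing u with
  | nil => intro e he; simp at he
  | cons a l ih =>
    obtain ⟨-, -, h⟩ := h
    intro e he
    rcases List.mem_cons.mp he with rfl | he'
    · cases l with
      | nil => exact Or.inr h
      | cons b l' => exact Or.inl ⟨b, by simp, h.2.1⟩
    · rcases ih h e he' with ⟨e', he'', hs'⟩ | ht'
      · exact Or.inl ⟨e', List.mem_cons_of_mem _ he'', hs'⟩
      · exact Or.inr ht'

lemma concat_isPath {W : Type*} {G : SimpleGraph W} {u v w : W} {p : G.Walk u v}
    (hp : p.IsPath) (h : G.Adj v w) (hw : w ∉ p.support) : (p.concat h).IsPath := by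
  rw [← SimpleGraph.Walk.isPath_reverse_iff, SimpleGraph.Walk.reverse_concat]
  rw [SimpleGraph.Walk.cons_isPath_iff]
  exact ⟨hp.reverse, by rwa [SimpleGraph.Walk.support_reverse, List.mem_reverse]⟩

lemma finsucc (N : ℕ) [NeZero N] (hN : 2 ≤ N) (i : Fin N) :
    ((i + 1 : Fin N).val = i.val + 1 ∧ i.val + 1 < N) ∨
    ((i + 1 : Fin N).val = 0 ∧ i.val + 1 = N) := by
  have h1 : ((1 : Fin N) : ℕ) = 1 := by
    rw [Fin.val_one']; exact Nat.mod_eq_of_lt (by omega)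
  have hval : ((i + 1 : Fin N) : ℕ) = (i.val + 1) % N := by rw [Fin.val_add, h1]
  rcases Nat.lt_or_ge (i.val + 1) N with h | h
  · exact Or.inl ⟨by rw [hval]; exact Nat.mod_eq_of_lt h, h⟩
  · have he : i.val + 1 = N := by have := i.isLt; omega
    exact Or.inr ⟨by rw [hval, he, Nat.mod_self], he⟩

end BQAux

/-- let `Q` be a finite connected quiver in which every arrow lies on a
cycle, every vertex lies on exactly two cycles, and two distinct cycles share at most
one vertex (a Brauer quiver).  Then the graph whose vertices are the cycles of `Q`, two
cycles being adjacent when they meet, is a tree; consequently the cycles can be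
2-colored so that intersecting cycles get different colors. -/
theorem stmt13 (V E : Type*) [Fintype V] [Fintype E] [Nonempty V] (s t : E → V)
    -- `Q` is connected:
    (hconn : ∀ v w : V, Relation.ReflTransGen
      (fun a b => ∃ e : E, (s e = a ∧ t e = b) ∨ (s e = b ∧ t e = a)) v w)
    -- every arrow lies on a cycle:
    (harrow : ∀ e : E, ∃ C : Set E, IsCycleSet s t C ∧ e ∈ C)
    -- every vertex lies on exactly two cycles:
    (hvert : ∀ v : V, ∃ C₁ C₂ : Set E, IsCycleSet s t C₁ ∧ IsCycleSet s t C₂ ∧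
      C₁ ≠ C₂ ∧ v ∈ verts s C₁ ∧ v ∈ verts s C₂ ∧
      ∀ C : Set E, IsCycleSet s t C → v ∈ verts s C → C = C₁ ∨ C = C₂)
    -- two distinct cycles have at most one vertex in common:
    (hmeet : ∀ C₁ C₂ : Set E, IsCycleSet s t C₁ → IsCycleSet s t C₂ → C₁ ≠ C₂ →
      (verts s C₁ ∩ verts s C₂).Subsingleton) :
    (SimpleGraph.mk
      (fun C₁ C₂ : {C : Set E // IsCycleSet s t C} =>
        C₁ ≠ C₂ ∧ (verts s C₁.1 ∩ verts s C₂.1).Nonempty)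
      ⟨fun C₁ C₂ h => ⟨h.1.symm, by rw [Set.inter_comm]; exact h.2⟩⟩
      ⟨fun C h => h.1 rfl⟩).IsTree ∧
    ∃ color : {C : Set E // IsCycleSet s t C} → Bool,
      ∀ C₁ C₂ : {C : Set E // IsCycleSet s t C},
        C₁ ≠ C₂ → (verts s C₁.1 ∩ verts s C₂.1).Nonempty → color C₁ ≠ color C₂ := by
  classical
  let G : SimpleGraph {C : Set E // IsCycleSet s t C} :=
    SimpleGraph.mk
      (fun C₁ C₂ => C₁ ≠ C₂ ∧ (verts s C₁.1 ∩ verts s C₂.1).Nonempty)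
      ⟨fun C₁ C₂ h => ⟨h.1.symm, by rw [Set.inter_comm]; exact h.2⟩⟩
      ⟨fun C h => h.1 rfl⟩
  show G.IsTree ∧ ∃ color : {C : Set E // IsCycleSet s t C} → Bool,
      ∀ C₁ C₂ : {C : Set E // IsCycleSet s t C},
        C₁ ≠ C₂ → (verts s C₁.1 ∩ verts s C₂.1).Nonempty → color C₁ ≠ color C₂
  -- basic adjacency facts
  have hGadj : ∀ a b : {C : Set E // IsCycleSet s t C}, a ≠ b →
      (verts s a.1 ∩ verts s b.1).Nonempty → G.Adj a b := fun a b h1 h2 => ⟨h1, h2⟩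
  have hreachmem : ∀ (x : V) (a b : {C : Set E // IsCycleSet s t C}),
      x ∈ verts s a.1 → x ∈ verts s b.1 → G.Reachable a b := by
    intro x a b ha hb
    by_cases h : a = b
    · subst h; rfl
    · exact (hGadj a b h ⟨x, ha, hb⟩).reachable
  -- connectedness of G
  have hne_T : Nonempty {C : Set E // IsCycleSet s t C} := by
    obtain ⟨C₁, C₂, hC₁, -⟩ := hvert (Classical.arbitrary V)
    exact ⟨⟨C₁, hC₁⟩⟩
  have hconnG : G.Connected := by
    rw [SimpleGraph.connected_iff]
    refine ⟨?_, hne_T⟩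
    intro a b
    obtain ⟨ea, hea⟩ := a.2.1
    obtain ⟨eb, heb⟩ := b.2.1
    have main : ∀ w', Relation.ReflTransGen
        (fun x y => ∃ e : E, (s e = x ∧ t e = y) ∨ (s e = y ∧ t e = x)) (s ea) w' →
        ∀ b' : {C : Set E // IsCycleSet s t C}, w' ∈ verts s b'.1 → G.Reachable a b' := by
      intro w' hw'
      induction hw' with
      | refl => intro b' hb'; exact hreachmem _ a b' ⟨ea, hea, rfl⟩ hb'
      | @tail x y h1 h2 ih =>
        intro b' hb'
        obtain ⟨e, he⟩ := h2
        obtain ⟨D, hD, heD⟩ := harrow e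
        have hx : x ∈ verts s D := by
          rcases he with ⟨h3, -⟩ | ⟨-, h4⟩
          · exact h3 ▸ ⟨e, heD, rfl⟩
          · exact h4 ▸ BQAux.target_mem_verts hD heD
        have hy : y ∈ verts s D := by
          rcases he with ⟨-, h4⟩ | ⟨h3, -⟩
          · exact h4 ▸ BQAux.target_mem_verts hD heD
          · exact h3 ▸ ⟨e, heD, rfl⟩
        exact (ih ⟨D, hD⟩ hx).trans (hreachmem y ⟨D, hD⟩ b' hy hb')
    exact main _ (hconn (s ea) (s eb)) b ⟨eb, heb, rfl⟩
  -- no cyclically-adjacent injective tuple of cycles of length ≥ 3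
  have noBad : ∀ n : ℕ, ¬(∃ f : Fin (n + 3) → {C : Set E // IsCycleSet s t C},
      Function.Injective f ∧ ∀ i : Fin (n + 3), G.Adj (f i) (f (i + 1))) := by
    intro n
    induction n using Nat.strong_induction_on with
    | _ n IH =>
    rintro ⟨f, hinj, hadj⟩
    -- chord elimination via minimality
    have chord : ∀ a b : Fin (n + 3), a.val < b.val → G.Adj (f a) (f b) →
        b.val = a.val + 1 ∨ (a.val = 0 ∧ b.val = (n + 3) - 1) := by
      intro a b hab hA
      by_contra hcon
      push_neg at hcon
      obtain ⟨h1, h2⟩ := hcon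
      have hbn := b.isLt
      have han := a.isLt
      have hb2 : a.val + 2 ≤ b.val := by omega
      have hmlt : b.val - a.val + 1 < n + 3 := by
        by_cases ha0 : a.val = 0
        · have := h2 ha0; omega
        · omega
      apply IH (b.val - a.val + 1 - 3) (by omega)
      have hmlt' : b.val - a.val + 1 - 3 + 3 ≤ n + 3 := by omega
      have hvk : ∀ k' : Fin (b.val - a.val + 1 - 3 + 3),
          ((a + Fin.castLE hmlt' k' : Fin (n + 3)) : ℕ) = a.val + k'.val := by
        intro k'
        rw [Fin.val_add, Fin.coe_castLE]
        exact Nat.mod_eq_of_lt (by have := k'.isLt; have := b.isLt; omega)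
      refine ⟨fun k => f (a + Fin.castLE hmlt' k), ?_, ?_⟩
      · intro k₁ k₂ hk
        have hk' := hinj hk
        have h2' := add_left_cancel hk'
        have hv := congrArg Fin.val h2'
        simp only [Fin.coe_castLE] at hv
        exact Fin.ext hv
      · intro k
        show G.Adj (f (a + Fin.castLE hmlt' k)) (f (a + Fin.castLE hmlt' (k + 1)))
        rcases BQAux.finsucc (b.val - a.val + 1 - 3 + 3) (by omega) k with
          ⟨hk1, hk2⟩ | ⟨hk1, hk2⟩
        · have he : a + Fin.castLE hmlt' (k + 1)
              = (a + Fin.castLE hmlt' k) + 1 := by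
            apply Fin.ext
            rw [hvk (k + 1), hk1]
            have hax := hvk k
            have hbL := b.isLt
            rcases BQAux.finsucc (n + 3) (by omega) (a + Fin.castLE hmlt' k) with
              ⟨g1, g2⟩ | ⟨g1, g2⟩ <;> omega
          rw [he]
          exact hadj _
        · have he1 : a + Fin.castLE hmlt' (k + 1) = a := by
            apply Fin.ext
            rw [hvk (k + 1), hk1]
            omega
          have he2 : a + Fin.castLE hmlt' k = b := by
            apply Fin.ext
            rw [hvk k]
            omega
          rw [he1, he2]
          exact hA.symm
    have hchord : ∀ i j : Fin (n + 3), G.Adj (f i) (f j) → j = i + 1 ∨ i = j + 1 := by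
      intro i j hA
      have hij : i ≠ j := fun h => hA.1 (congrArg f h)
      rcases lt_trichotomy i.val j.val with h | h | h
      · rcases chord i j h hA with hc | ⟨hc1, hc2⟩
        · left; apply Fin.ext
          have := j.isLt
          rcases BQAux.finsucc (n + 3) (by omega) i with ⟨g1, g2⟩ | ⟨g1, g2⟩ <;> omega
        · right; apply Fin.ext
          have := j.isLt
          rcases BQAux.finsucc (n + 3) (by omega) j with ⟨g1, g2⟩ | ⟨g1, g2⟩ <;> omega
      · exact absurd (Fin.ext h) hij
      · rcases chord j i h hA.symm with hc | ⟨hc1, hc2⟩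
        · right; apply Fin.ext
          have := i.isLt
          rcases BQAux.finsucc (n + 3) (by omega) j with ⟨g1, g2⟩ | ⟨g1, g2⟩ <;> omega
        · left; apply Fin.ext
          have := i.isLt
          rcases BQAux.finsucc (n + 3) (by omega) i with ⟨g1, g2⟩ | ⟨g1, g2⟩ <;> omega
    -- shared vertices of consecutive cycles
    have vne : ∀ i j : Fin (n + 3), i.val ≠ j.val → f i ≠ f j :=
      fun i j h hf => h (congrArg Fin.val (hinj hf))
    choose v hv using fun i : Fin (n + 3) => (hadj i).2
    have hv1 : ∀ i, v i ∈ verts s (f i).1 := fun i => (hv i).1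
    have hv2 : ∀ i, v i ∈ verts s (f (i + 1)).1 := fun i => (hv i).2
    have hvals : ∀ i : Fin (n + 3),
        i.val ≠ (i+1).val ∧ (i+1).val ≠ (i+1+1).val ∧ i.val ≠ (i+1+1).val := by
      intro i
      have := i.isLt
      rcases BQAux.finsucc (n + 3) (by omega) i with ⟨a1, a2⟩ | ⟨a1, a2⟩ <;>
        rcases BQAux.finsucc (n + 3) (by omega) (i+1) with ⟨b1, b2⟩ | ⟨b1, b2⟩ <;>
        refine ⟨by omega, by omega, by omega⟩
    have hvne : ∀ i : Fin (n + 3), v i ≠ v (i + 1) := by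
      intro i heq
      obtain ⟨C₁, C₂, hC₁, hC₂, h12, -, -, huniq⟩ := hvert (v i)
      have m1 := huniq (f i).1 (f i).2 (hv1 i)
      have m2 := huniq (f (i+1)).1 (f (i+1)).2 (hv2 i)
      have m3 := huniq (f (i+1+1)).1 (f (i+1+1)).2 (by rw [heq]; exact hv2 (i+1))
      have e01 : (f i).1 ≠ (f (i+1)).1 :=
        fun h => vne i (i+1) (hvals i).1 (Subtype.ext h)
      have e12 : (f (i+1)).1 ≠ (f (i+1+1)).1 :=
        fun h => vne _ _ (hvals i).2.1 (Subtype.ext h)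
      have e02 : (f i).1 ≠ (f (i+1+1)).1 :=
        fun h => vne _ _ (hvals i).2.2 (Subtype.ext h)
      rcases m1 with h1 | h1 <;> rcases m2 with h2 | h2 <;> rcases m3 with h3 | h3
      · exact e01 (h1.trans h2.symm)
      · exact e01 (h1.trans h2.symm)
      · exact e02 (h1.trans h3.symm)
      · exact e12 (h2.trans h3.symm)
      · exact e12 (h2.trans h3.symm)
      · exact e02 (h1.trans h3.symm)
      · exact e01 (h1.trans h2.symm)
      · exact e01 (h1.trans h2.symm)
    -- choose directed paths between consecutive shared vertices
    have hpex : ∀ i : Fin (n + 3), ∃ l, BQAux.Ok s t (f (i+1)).1 (v i) (v (i+1)) l ∧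
        (l.map s).Nodup ∧ v (i+1) ∉ l.map s :=
      fun i => BQAux.exists_ok_path (f (i+1)).2 (hv2 i) (hv1 (i+1))
    choose p hpok hpnd hpnm using hpex
    have hpne : ∀ i, p i ≠ [] := by
      intro i h
      have h' := hpok i
      rw [h] at h'
      exact hvne i h'
    have hex : ∀ i : Fin (n + 3), ∃ (a : E) (l' : List E), p i = a :: l' :=
      fun i => List.exists_cons_of_ne_nil (hpne i)
    choose hd tl hcons using hex
    have hhds : ∀ i, s (hd i) = v i := by
      intro i
      have h := hpok i
      rw [hcons i] at h
      exact h.2.1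
    have hhdm : ∀ i, hd i ∈ p i := by
      intro i; rw [hcons i]; exact List.mem_cons_self
    set Cs : Set E := {e | ∃ i : Fin (n + 3), e ∈ p i} with hCsdef
    have hmemC : ∀ i : Fin (n + 3), ∀ e ∈ p i, e ∈ (f (i+1)).1 := fun i => (hpok i).mem
    have hsrc : ∀ i : Fin (n + 3), ∀ e ∈ p i, s e ∈ verts s (f (i+1)).1 :=
      fun i e he => ⟨e, hmemC i e he, rfl⟩
    have hPi : ∀ i : Fin (n + 3), ∀ x ∈ p i, x ∈ Cs := fun i x hx => ⟨i, hx⟩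
    -- injectivity of sources on Cs
    have hinjOn : Set.InjOn s Cs := by
      rintro e ⟨i, hei⟩ e' ⟨j, hej⟩ hss
      by_cases hij : i = j
      · subst hij; exact BQAux.nodup_map_mem_inj (hpnd i) hei hej hss
      · exfalso
        have hvij : f (i+1) ≠ f (j+1) := by
          intro h
          exact hij (add_right_cancel (hinj h))
        have hA : G.Adj (f (i+1)) (f (j+1)) :=
          ⟨hvij, ⟨s e, hsrc i e hei, by rw [hss]; exact hsrc j e' hej⟩⟩
        rcases hchord _ _ hA with hc | hc
        · have hj : j = i + 1 := add_right_cancel hc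
          subst hj
          have hsub := hmeet (f (i+1)).1 (f (i+1+1)).1 (f (i+1)).2 (f (i+1+1)).2
            (fun h => hvij (Subtype.ext h))
          have hx1 : s e ∈ verts s (f (i+1)).1 ∩ verts s (f (i+1+1)).1 :=
            ⟨hsrc i e hei, by rw [hss]; exact hsrc (i+1) e' hej⟩
          have hx2 : v (i+1) ∈ verts s (f (i+1)).1 ∩ verts s (f (i+1+1)).1 :=
            ⟨hv1 (i+1), hv2 (i+1)⟩
          have heqv : s e = v (i+1) := hsub hx1 hx2
          apply hpnm i
          rw [← heqv]
          exact List.mem_map_of_mem (f := s) hei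
        · have hi : i = j + 1 := add_right_cancel hc
          subst hi
          have hsub := hmeet (f (j+1)).1 (f (j+1+1)).1 (f (j+1)).2 (f (j+1+1)).2
            (fun h => hvij (Subtype.ext h.symm))
          have hx1 : s e' ∈ verts s (f (j+1)).1 ∩ verts s (f (j+1+1)).1 :=
            ⟨hsrc j e' hej, by rw [← hss]; exact hsrc (j+1) e hei⟩
          have hx2 : v (j+1) ∈ verts s (f (j+1)).1 ∩ verts s (f (j+1+1)).1 :=
            ⟨hv1 (j+1), hv2 (j+1)⟩
          have heqv : s e' = v (j+1) := hsub hx1 hx2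
          apply hpnm j
          rw [← heqv]
          exact List.mem_map_of_mem (f := s) hej
    set i₀ : Fin (n + 3) := ⟨0, by omega⟩ with hi₀
    -- Cs is a cycle
    have hCs : IsCycleSet s t Cs := by
      refine ⟨⟨hd i₀, hPi i₀ _ (hhdm i₀)⟩, hinjOn, ?_, ?_⟩
      · rintro e ⟨i, hei⟩
        rcases BQAux.ok_succ (hpok i) e hei with ⟨e', he', hs'⟩ | hte
        · exact ⟨e', hPi i _ he', hs'⟩
        · exact ⟨hd (i+1), hPi (i+1) _ (hhdm (i+1)), by rw [hhds (i+1), hte]⟩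
      · rintro e ⟨i, hei⟩ e' ⟨j, hej⟩
        have hstep : ∀ k : Fin (n + 3), Relation.ReflTransGen
            (fun a b => a ∈ Cs ∧ b ∈ Cs ∧ t a = s b) (hd k) (hd (k+1)) := by
          intro k
          obtain ⟨e'', he'', ht'', hr⟩ :=
            BQAux.ok_reach_end (hpok k) (hPi k) (hd k) (hhdm k)
          exact hr.trans (Relation.ReflTransGen.single
            ⟨hPi k _ he'', hPi (k+1) _ (hhdm (k+1)), by rw [ht'', hhds (k+1)]⟩)
        open Fin.NatCast in
        have hiter : ∀ (m : ℕ) (k : Fin (n + 3)), Relation.ReflTransGen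
            (fun a b => a ∈ Cs ∧ b ∈ Cs ∧ t a = s b) (hd k) (hd (k + (m : Fin (n + 3)))) := by
          intro m
          induction m with
          | zero =>
            intro k
            simp only [Nat.cast_zero, add_zero]
            exact Relation.ReflTransGen.refl
          | succ m ih =>
            intro k
            have hc : ((m + 1 : ℕ) : Fin (n + 3)) = (m : Fin (n + 3)) + 1 := by push_cast; ring
            rw [hc, ← add_assoc]
            exact (ih k).trans (hstep _)
        open Fin.NatCast in
        have hhdhd : ∀ k k' : Fin (n + 3), Relation.ReflTransGen
            (fun a b => a ∈ Cs ∧ b ∈ Cs ∧ t a = s b) (hd k) (hd k') := by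
          intro k k'
          have h := hiter (k' - k).val k
          rw [Fin.cast_val_eq_self] at h
          rwa [show k + (k' - k) = k' from add_sub_cancel k k'] at h
        obtain ⟨e₂, he₂, ht₂, hr₂⟩ := BQAux.ok_reach_end (hpok i) (hPi i) e hei
        have h1 : Relation.ReflTransGen
            (fun a b => a ∈ Cs ∧ b ∈ Cs ∧ t a = s b) e (hd (i+1)) :=
          hr₂.trans (Relation.ReflTransGen.single
            ⟨hPi i _ he₂, hPi (i+1) _ (hhdm (i+1)), by rw [ht₂, hhds (i+1)]⟩)
        have h3 : Relation.ReflTransGen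
            (fun a b => a ∈ Cs ∧ b ∈ Cs ∧ t a = s b) (hd j) e' := by
          have hok' := hpok j
          rw [hcons j] at hok'
          exact BQAux.ok_reach_head hok'
            (by rw [← hcons j]; exact hPi j) e' (by rw [← hcons j]; exact hej)
        exact (h1.trans (hhdhd (i+1) j)).trans h3
    -- final contradiction: three cycles through one vertex
    have pick : ∀ (x : V) (X Y : {C : Set E // IsCycleSet s t C}),
        x ∈ verts s X.1 → x ∈ verts s Y.1 → X.1 ≠ Y.1 → x ∈ verts s Cs →
        Cs = X.1 ∨ Cs = Y.1 := by
      intro x X Y hx hy hXY hxC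
      obtain ⟨C₁, C₂, hC₁, hC₂, h12, -, -, huniq⟩ := hvert x
      have mX := huniq X.1 X.2 hx
      have mY := huniq Y.1 Y.2 hy
      have mZ := huniq Cs hCs hxC
      rcases mZ with hz | hz
      · rcases mX with hx' | hx'
        · exact Or.inl (hz.trans hx'.symm)
        · rcases mY with hy' | hy'
          · exact Or.inr (hz.trans hy'.symm)
          · exact absurd (hx'.trans hy'.symm) hXY
      · rcases mX with hx' | hx'
        · rcases mY with hy' | hy'
          · exact absurd (hx'.trans hy'.symm) hXY
          · exact Or.inr (hz.trans hy'.symm)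
        · exact Or.inl (hz.trans hx'.symm)
    have hvmem : ∀ i : Fin (n + 3), v i ∈ verts s Cs :=
      fun i => ⟨hd i, hPi i _ (hhdm i), hhds i⟩
    have h10 : (i₀+1).val = 1 := by
      rcases BQAux.finsucc (n + 3) (by omega) i₀ with ⟨a1, a2⟩ | ⟨a1, a2⟩ <;>
        simp only [hi₀] at a1 a2 ⊢ <;> omega
    have h20 : (i₀+1+1).val = 2 := by
      rcases BQAux.finsucc (n + 3) (by omega) (i₀+1) with ⟨a1, a2⟩ | ⟨a1, a2⟩ <;> omega
    have h30 : (i₀+1+1+1).val = 3 ∨ (i₀+1+1+1).val = 0 := by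
      rcases BQAux.finsucc (n + 3) (by omega) (i₀+1+1) with ⟨a1, a2⟩ | ⟨a1, a2⟩ <;> omega
    have hval0 : i₀.val = 0 := rfl
    have d01 : (f i₀).1 ≠ (f (i₀+1)).1 :=
      fun h => vne _ _ (by omega) (Subtype.ext h)
    have d12 : (f (i₀+1)).1 ≠ (f (i₀+1+1)).1 :=
      fun h => vne _ _ (by omega) (Subtype.ext h)
    have d02 : (f i₀).1 ≠ (f (i₀+1+1)).1 :=
      fun h => vne _ _ (by omega) (Subtype.ext h)
    have d13 : (f (i₀+1)).1 ≠ (f (i₀+1+1+1)).1 :=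
      fun h => vne _ _ (by rcases h30 with h' | h' <;> omega) (Subtype.ext h)
    have d23 : (f (i₀+1+1)).1 ≠ (f (i₀+1+1+1)).1 :=
      fun h => vne _ _ (by rcases h30 with h' | h' <;> omega) (Subtype.ext h)
    have hA := pick (v i₀) (f i₀) (f (i₀+1)) (hv1 i₀) (hv2 i₀) d01 (hvmem i₀)
    have hB := pick (v (i₀+1)) (f (i₀+1)) (f (i₀+1+1)) (hv1 _) (hv2 _) d12 (hvmem _)
    have hC := pick (v (i₀+1+1)) (f (i₀+1+1)) (f (i₀+1+1+1)) (hv1 _) (hv2 _) d23 (hvmem _)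
    rcases hA with hA | hA <;> rcases hB with hB | hB <;> rcases hC with hC | hC
    · exact d01 (hA.symm.trans hB)
    · exact d01 (hA.symm.trans hB)
    · exact d02 (hA.symm.trans hB)
    · exact d02 (hA.symm.trans hB)
    · exact d12 (hA.symm.trans hC)
    · exact d13 (hA.symm.trans hC)
    · exact d12 (hA.symm.trans hB)
    · exact d12 (hA.symm.trans hB)
  -- acyclicity
  have hacyclic : G.IsAcyclic := by
    intro c q hq
    have h3 := hq.three_le_length
    haveI : NeZero q.length := ⟨by omega⟩
    apply noBad (q.length - 3)
    have hQ : q.length - 3 + 3 = q.length := by omega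
    have hlen : q.support.length = q.length + 1 := SimpleGraph.Walk.length_support q
    have hget : ∀ i : Fin (q.length - 3 + 3), i.val < q.support.length := by
      intro i; have := i.isLt; omega
    refine ⟨fun i => q.support.get ⟨i.val, hget i⟩, ?_, ?_⟩
    · -- injectivity
      have htail : q.support.tail.Nodup := hq.support_nodup
      have hconsS : q.support = c :: q.support.tail := q.support_eq_cons
      have htne : q.support.tail ≠ [] := by
        intro h
        have hts : q.support.length = 1 := by rw [hconsS, h]; rfl
        omega
      have hlast : q.support.tail.getLast htne = c := by
        rw [List.getLast_tail]
        exact q.getLast_support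
      have hcnotin : c ∉ q.support.tail.dropLast := by
        have hsplit := List.dropLast_append_getLast htne
        have hnd2 := htail
        rw [← hsplit] at hnd2
        have hdisj := List.disjoint_of_nodup_append hnd2
        intro hmem
        exact hdisj hmem (by rw [hlast]; exact List.mem_singleton_self c)
      have hdrop : q.support.dropLast = c :: q.support.tail.dropLast := by
        conv_lhs => rw [hconsS]
        exact List.dropLast_cons_of_ne_nil htne
      have hnd : q.support.dropLast.Nodup := by
        rw [hdrop]
        exact List.nodup_cons.mpr
          ⟨hcnotin, List.Nodup.sublist (List.dropLast_sublist _) htail⟩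
      intro i j hij
      have hij' : q.support.get ⟨i.val, hget i⟩ = q.support.get ⟨j.val, hget j⟩ := hij
      have hdl : q.support.dropLast.length = q.length := by
        rw [List.length_dropLast, hlen]
        omega
      have hgi : ∀ k : Fin (q.length - 3 + 3), q.support.get ⟨k.val, hget k⟩ =
          q.support.dropLast.get ⟨k.val, by have := k.isLt; omega⟩ := by
        intro k
        simp only [List.get_eq_getElem, List.getElem_dropLast]
      rw [hgi i, hgi j] at hij'
      have := (List.nodup_iff_injective_get.mp hnd) hij'
      have hv2 := congrArg Fin.val this
      exact Fin.ext hv2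
    · -- adjacency
      intro i
      show G.Adj (q.support.get ⟨i.val, hget i⟩)
        (q.support.get ⟨(i + 1 : Fin (q.length - 3 + 3)).val, hget _⟩)
      have hchain : ∀ (k : ℕ) (hk : k < q.support.length - 1),
          G.Adj (q.support.get ⟨k, by omega⟩) (q.support.get ⟨k + 1, by omega⟩) :=
        fun k hk => List.isChain_iff_getElem.mp (SimpleGraph.Walk.isChain_adj_support q) k (by omega)
      rcases BQAux.finsucc (q.length - 3 + 3) (by omega) i with ⟨h1, h2⟩ | ⟨h1, h2⟩
      · have hA := hchain i.val (by rw [hlen]; simp; omega)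
        have hix : (⟨(i+1 : Fin (q.length - 3 + 3)).val, hget _⟩ : Fin q.support.length)
            = ⟨i.val + 1, by have := i.isLt; omega⟩ := Fin.ext h1
        rw [hix]
        exact hA
      · have hA := hchain i.val (by rw [hlen]; simp; omega)
        have hg1 : q.support.get ⟨i.val + 1, by have := i.isLt; omega⟩ = c := by
          have hfin : (⟨i.val + 1, by have := i.isLt; omega⟩ : Fin q.support.length)
              = ⟨q.support.length - 1, by omega⟩ := Fin.ext (by simp; omega)
          rw [hfin, List.get_eq_getElem]
          have hgl := q.getLast_support
          rw [List.getLast_eq_getElem] at hgl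
          exact hgl
        have hg0 : q.support.get ⟨(i+1 : Fin (q.length - 3 + 3)).val, hget _⟩ = c := by
          have hix : ((⟨(i+1 : Fin (q.length - 3 + 3)).val, hget _⟩ : Fin q.support.length))
              = ⟨0, by omega⟩ := Fin.ext h1
          rw [hix, List.get_mk_zero]
          exact q.head_support
        rw [hg0]
        rw [hg1] at hA
        exact hA
  -- the tree
  refine ⟨⟨hconnG, hacyclic⟩, ?_⟩
  -- 2-coloring from the tree structure
  have hneT := hconnG.nonempty
  let r : {C : Set E // IsCycleSet s t C} := Classical.arbitrary _
  have hpth : ∀ a, ∃ w : G.Walk r a, w.IsPath := by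
    intro a
    have h := hconnG.preconnected r a
    exact ⟨(Classical.choice h).bypass, SimpleGraph.Walk.bypass_isPath _⟩
  choose P hP using hpth
  have hkey : ∀ a b, G.Adj a b →
      (P b).length = (P a).length + 1 ∨ (P a).length = (P b).length + 1 := by
    intro a b hA
    by_cases hmem : b ∈ (P a).support
    · right
      have htk : ((P a).takeUntil b hmem).IsPath := (hP a).takeUntil hmem
      have hPb : P b = (P a).takeUntil b hmem :=
        congrArg Subtype.val (hacyclic.path_unique ⟨P b, hP b⟩ ⟨_, htk⟩)
      have hna : a ∉ (P b).support := by
        rw [hPb]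
        intro hmem2
        have hspec := SimpleGraph.Walk.take_spec (P a) hmem
        have hnodup := (hP a).support_nodup
        rw [← hspec, SimpleGraph.Walk.support_append] at hnodup
        have hdisj := List.disjoint_of_nodup_append hnodup
        have hamem : a ∈ ((P a).dropUntil b hmem).support :=
          SimpleGraph.Walk.end_mem_support _
        have hat : a ∈ ((P a).dropUntil b hmem).support.tail := by
          have hc2 := ((P a).dropUntil b hmem).support_eq_cons
          rw [hc2] at hamem
          rcases List.mem_cons.mp hamem with h | h
          · exact absurd h hA.ne
          · exact h
        exact hdisj hmem2 hat
      have hq2 : ((P b).concat hA.symm).IsPath := BQAux.concat_isPath (hP b) hA.symm hna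
      have hthis := congrArg (fun (x : G.Path r a) => x.1.length)
        (hacyclic.path_unique ⟨P a, hP a⟩ ⟨(P b).concat hA.symm, hq2⟩)
      simp only [SimpleGraph.Walk.length_concat] at hthis
      exact hthis
    · left
      have hq2 : ((P a).concat hA).IsPath := BQAux.concat_isPath (hP a) hA hmem
      have hthis := congrArg (fun (x : G.Path r b) => x.1.length)
        (hacyclic.path_unique ⟨P b, hP b⟩ ⟨(P a).concat hA, hq2⟩)
      simp only [SimpleGraph.Walk.length_concat] at hthis
      exact hthis
  refine ⟨fun a => Nat.bodd (P a).length, ?_⟩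
  intro C₁ C₂ hne hint
  have hA : G.Adj C₁ C₂ := ⟨hne, hint⟩
  show Nat.bodd (P C₁).length ≠ Nat.bodd (P C₂).length
  rcases hkey C₁ C₂ hA with h | h
  · rw [h, Nat.bodd_succ]
    cases Nat.bodd (P C₁).length <;> simp
  · rw [h, Nat.bodd_succ]
    cases Nat.bodd (P C₂).length <;> simp
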